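/- Let d ≥ 1 and let P ⊆ ℝ^d_{++} satisfy the rich-price condition: the interior of the closure of the cone ⋃_{λ>0}{λp : p ∈ P} equals ℝ^d_{++}. Let Y and Y′ be production sets such that sup_{y∈Y} p·y and sup_{y∈Y′} p·y are finite for every p ∈ ℝ^d_{++} (this finiteness follows from the recession cone property), and suppose sup_{y∈Y} p·y = sup_{y∈Y′} p·y for every p ∈ P. Then Y = Y′. -/

import Mathlib

open scoped RealInnerProductSpace

/-- The strictly positive orthant of `ℝ^d`. -/
def posOrthant (d : ℕ) : Set (EuclideanSpace ℝ (Fin d)) := {p | ∀ i, 0 < p i}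

/-- Free disposal: anything componentwise below a feasible point is feasible. -/
def FreeDisposal {d : ℕ} (Y : Set (EuclideanSpace ℝ (Fin d))) : Prop :=
  ∀ y ∈ Y, ∀ y' : EuclideanSpace ℝ (Fin d), (∀ i, y' i ≤ y i) → y' ∈ Y

/-- Recession cone property: accumulation points of `y^m/‖y^m‖` along a norm-divergent
sequence in `Y` lie in the nonpositive orthant. -/
def RecessionConeProp {d : ℕ} (Y : Set (EuclideanSpace ℝ (Fin d))) : Prop :=
  ∀ ym : ℕ → EuclideanSpace ℝ (Fin d), (∀ m, ym m ∈ Y) →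
    Filter.Tendsto (fun m => ‖ym m‖) Filter.atTop Filter.atTop →
    ∀ z : EuclideanSpace ℝ (Fin d),
      MapClusterPt z Filter.atTop (fun m => ‖ym m‖⁻¹ • ym m) → ∀ i, z i ≤ 0

/-- A production set: nonempty, closed, convex, free disposal, recession cone property. -/
def IsProductionSet {d : ℕ} (Y : Set (EuclideanSpace ℝ (Fin d))) : Prop :=
  Y.Nonempty ∧ IsClosed Y ∧ Convex ℝ Y ∧ FreeDisposal Y ∧ RecessionConeProp Y

/- ----------------- auxiliary lemmas ----------------- -/

lemma posOrthant_isOpen (d : ℕ) : IsOpen (posOrthant d) := by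
  have h : posOrthant d = ⋂ i, (fun p : EuclideanSpace ℝ (Fin d) => p i) ⁻¹' Set.Ioi 0 := by
    ext p; simp [posOrthant]
  rw [h]
  exact isOpen_iInter_of_finite fun i => isOpen_Ioi.preimage (EuclideanSpace.proj i).continuous

lemma posOrthant_convex (d : ℕ) : Convex ℝ (posOrthant d) := by
  intro p hp q hq a b ha hb hab
  intro i
  have h : (a • p + b • q) i = a * p i + b * q i := rfl
  rw [h]
  rcases eq_or_lt_of_le ha with ha' | ha'
  · have hb' : b = 1 := by linarith
    simp [← ha', hb', hq i]
  · exact add_pos_of_pos_of_nonneg (mul_pos ha' (hp i)) (mul_nonneg hb (hq i).le)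

lemma prof_convexOn {d : ℕ} (Y : Set (EuclideanSpace ℝ (Fin d)))
    (profY : EuclideanSpace ℝ (Fin d) → ℝ)
    (h : ∀ p ∈ posOrthant d, IsLUB ((fun y => ⟪p, y⟫) '' Y) (profY p)) :
    ConvexOn ℝ (posOrthant d) profY := by
  refine ⟨posOrthant_convex d, ?_⟩
  intro p hp q hq a b ha hb hab
  have hm := posOrthant_convex d hp hq ha hb hab
  refine (h _ hm).2 ?_
  rintro r ⟨y, hy, rfl⟩
  have he : ⟪a • p + b • q, y⟫ = a * ⟪p, y⟫ + b * ⟪q, y⟫ := by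
    simp [inner_add_left, real_inner_smul_left, PiLp.inner_apply, Finset.mul_sum, mul_assoc]
    congr 1 <;> exact Finset.sum_congr rfl fun i _ => by ring
  simp only [he, smul_eq_mul]
  exact add_le_add (mul_le_mul_of_nonneg_left ((h p hp).1 ⟨y, hy, rfl⟩) ha)
    (mul_le_mul_of_nonneg_left ((h q hq).1 ⟨y, hy, rfl⟩) hb)

lemma isLUB_mul_left {s : Set ℝ} {a l : ℝ} (hl : 0 < l) (h : IsLUB s a) :
    IsLUB ((fun x => l * x) '' s) (l * a) := by
  constructor
  · rintro r ⟨x, hx, rfl⟩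
    exact mul_le_mul_of_nonneg_left (h.1 hx) hl.le
  · intro b hb
    have ha : a ≤ b / l := h.2 fun x hx => (le_div_iff₀ hl).2 (by
      rw [mul_comm]; exact hb ⟨x, hx, rfl⟩)
    calc l * a ≤ l * (b / l) := mul_le_mul_of_nonneg_left ha hl.le
      _ = b := by field_simp

/-- One direction of the identification result. -/
lemma subset_of_prof_eq {d : ℕ} (Y Y' : Set (EuclideanSpace ℝ (Fin d)))
    (hY'ne : Y'.Nonempty) (hY'cl : IsClosed Y') (hY'cv : Convex ℝ Y') (hY'fd : FreeDisposal Y')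
    (profY profY' : EuclideanSpace ℝ (Fin d) → ℝ)
    (hprofY : ∀ p ∈ posOrthant d, IsLUB ((fun y => ⟪p, y⟫) '' Y) (profY p))
    (hprofY' : ∀ p ∈ posOrthant d, IsLUB ((fun y => ⟪p, y⟫) '' Y') (profY' p))
    (hpe : ∀ p ∈ posOrthant d, profY p = profY' p) :
    Y ⊆ Y' := by
  intro y hy
  by_contra hyn
  obtain ⟨f, u, hfu, huy⟩ := geometric_hahn_banach_closed_point hY'cv hY'cl hyn
  set p := (InnerProductSpace.toDual ℝ (EuclideanSpace ℝ (Fin d))).symm f with hpdef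
  have hpz : ∀ z, ⟪p, z⟫ = f z := fun z => InnerProductSpace.toDual_symm_apply
  -- p has nonnegative coordinates (uses free disposal of Y')
  have hpnn : ∀ i, 0 ≤ p i := by
    intro i
    by_contra hpi
    push_neg at hpi
    obtain ⟨y0, hy0⟩ := hY'ne
    set t : ℝ := max ((u - f y0) / (-p i)) 0 + 1 with htdef
    have ht0 : 0 ≤ t := by positivity
    have htl : (u - f y0) / (-p i) < t := by
      have := le_max_left ((u - f y0) / (-p i)) 0; linarith
    have hmem : y0 - t • EuclideanSpace.single i (1 : ℝ) ∈ Y' := by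
      refine hY'fd y0 hy0 _ fun j => ?_
      have : (y0 - t • EuclideanSpace.single i (1 : ℝ)) j
          = y0 j - t * (EuclideanSpace.single i (1 : ℝ)) j := rfl
      rw [this]
      rcases eq_or_ne j i with rfl | hji
      · simp [EuclideanSpace.single_apply]
        nlinarith [ht0]
      · simp [EuclideanSpace.single_apply, hji]
    have hval : f (y0 - t • EuclideanSpace.single i (1 : ℝ)) = f y0 - t * p i := by
      rw [map_sub, map_smul]
      have : f (EuclideanSpace.single i (1 : ℝ)) = p i := by
        rw [← hpz]; simp [PiLp.inner_apply]
      rw [this, smul_eq_mul]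
    have hlt := hfu _ hmem
    rw [hval] at hlt
    have hneg : (0:ℝ) < -p i := by linarith
    have : u - f y0 < t * (-p i) := by
      calc u - f y0 = ((u - f y0) / (-p i)) * (-p i) := (div_mul_cancel₀ _ hneg.ne').symm
        _ < t * (-p i) := by
            exact mul_lt_mul_of_pos_right htl hneg
    linarith
  -- all-ones vector
  set one : EuclideanSpace ℝ (Fin d) := WithLp.toLp 2 (fun _ => 1) with honedef
  have hone : one ∈ posOrthant d := fun i => one_pos
  set A : ℝ := profY' one - ⟪one, y⟫ with hAdef
  set c : ℝ := f y - u with hcdef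
  have hc : 0 < c := by simp [hcdef]; linarith
  have key : ∀ ε : ℝ, 0 < ε → c ≤ ε * A := by
    intro ε hε
    set pε : EuclideanSpace ℝ (Fin d) := p + ε • one with hpεdef
    have hpε : pε ∈ posOrthant d := by
      intro i
      have : pε i = p i + ε * 1 := rfl
      rw [this]
      have := hpnn i; nlinarith
    have h1 : ⟪pε, y⟫ ≤ profY pε := (hprofY pε hpε).1 ⟨y, hy, rfl⟩
    have h2 : profY' pε ≤ u + ε * profY' one := by
      refine (hprofY' pε hpε).2 ?_
      rintro r ⟨b, hb, rfl⟩
      have he : ⟪pε, b⟫ = ⟪p, b⟫ + ε * ⟪one, b⟫ := by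
        simp [hpεdef, inner_add_left, PiLp.inner_apply]
        rw [Finset.mul_sum]
        exact Finset.sum_congr rfl fun i _ => by ring
      show ⟪pε, b⟫ ≤ u + ε * profY' one
      rw [he, hpz]
      have hb1 : f b < u := hfu b hb
      have hb2 : ⟪one, b⟫ ≤ profY' one := (hprofY' one hone).1 ⟨b, hb, rfl⟩
      nlinarith
    have he : ⟪pε, y⟫ = ⟪p, y⟫ + ε * ⟪one, y⟫ := by
      simp [hpεdef, inner_add_left, PiLp.inner_apply]
      rw [Finset.mul_sum]
      exact Finset.sum_congr rfl fun i _ => by ring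
    have h3 := hpe pε hpε
    rw [he, hpz] at h1
    have : f y + ε * ⟪one, y⟫ ≤ u + ε * profY' one := by linarith [h1, h2, h3.le]
    simp only [hAdef, hcdef]
    nlinarith
  -- derive contradiction
  have hM : (0:ℝ) < max A 1 := lt_of_lt_of_le one_pos (le_max_right _ _)
  set ε : ℝ := c / (2 * max A 1) with hεdef
  have hε : 0 < ε := by positivity
  have h4 := key ε hε
  have h5 : ε * A ≤ ε * max A 1 := mul_le_mul_of_nonneg_left (le_max_left _ _) hε.le
  have h6 : ε * max A 1 = c / 2 := by
    rw [hεdef]; field_simp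
  linarith

/-- Theorem 5.1(iii): under the rich-price condition, two production sets with finite
profit functions agreeing on `P` coincide. -/
theorem stmt2 (d : ℕ) (hd : 1 ≤ d)
    (P : Set (EuclideanSpace ℝ (Fin d))) (hPpos : P ⊆ posOrthant d)
    (hrich : interior (closure {q : EuclideanSpace ℝ (Fin d) |
        ∃ l : ℝ, 0 < l ∧ ∃ p ∈ P, q = l • p}) = posOrthant d)
    (Y Y' : Set (EuclideanSpace ℝ (Fin d)))
    (hY : IsProductionSet Y) (hY' : IsProductionSet Y')
    (profY profY' : EuclideanSpace ℝ (Fin d) → ℝ)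
    (hprofY : ∀ p ∈ posOrthant d, IsLUB ((fun y => ⟪p, y⟫) '' Y) (profY p))
    (hprofY' : ∀ p ∈ posOrthant d, IsLUB ((fun y => ⟪p, y⟫) '' Y') (profY' p))
    (heq : ∀ p ∈ P, profY p = profY' p) :
    Y = Y' := by
  set C : Set (EuclideanSpace ℝ (Fin d)) :=
    {q | ∃ l : ℝ, 0 < l ∧ ∃ p ∈ P, q = l • p} with hCdef
  have hCsub : C ⊆ posOrthant d := by
    rintro q ⟨l, hl, p, hp, rfl⟩ i
    have : (l • p) i = l * p i := rfl
    rw [this]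
    exact mul_pos hl (hPpos hp i)
  -- prof agrees on C by homogeneity
  have hCE : ∀ q ∈ C, profY q = profY' q := by
    rintro q ⟨l, hl, p, hp, rfl⟩
    have hppos := hPpos hp
    have hqpos : l • p ∈ posOrthant d := hCsub ⟨l, hl, p, hp, rfl⟩
    have himg : ∀ Z : Set (EuclideanSpace ℝ (Fin d)),
        (fun y => ⟪l • p, y⟫) '' Z = (fun x => l * x) '' ((fun y => ⟪p, y⟫) '' Z) := by
      intro Z
      rw [Set.image_image]
      apply Set.image_congr
      intro y _
      simp [real_inner_smul_left, PiLp.inner_apply, Finset.mul_sum, mul_assoc]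
      exact Finset.sum_congr rfl fun i _ => by ring
    have h1 : profY (l • p) = l * profY p := by
      refine (hprofY _ hqpos).unique ?_
      rw [himg Y]
      exact isLUB_mul_left hl (hprofY p hppos)
    have h2 : profY' (l • p) = l * profY' p := by
      refine (hprofY' _ hqpos).unique ?_
      rw [himg Y']
      exact isLUB_mul_left hl (hprofY' p hppos)
    rw [h1, h2, heq p hp]
  -- prof agrees on posOrthant by continuity and density
  have hpe : ∀ p ∈ posOrthant d, profY p = profY' p := by
    intro x hx
    have hxcl : x ∈ closure C := by
      have : x ∈ interior (closure C) := hrich ▸ hx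
      exact interior_subset this
    haveI : (nhdsWithin x C).NeBot := mem_closure_iff_nhdsWithin_neBot.1 hxcl
    have hcY : ContinuousAt profY x :=
      ((prof_convexOn Y profY hprofY).continuousOn (posOrthant_isOpen d)).continuousAt
        ((posOrthant_isOpen d).mem_nhds hx)
    have hcY' : ContinuousAt profY' x :=
      ((prof_convexOn Y' profY' hprofY').continuousOn (posOrthant_isOpen d)).continuousAt
        ((posOrthant_isOpen d).mem_nhds hx)
    have t1 : Filter.Tendsto profY (nhdsWithin x C) (nhds (profY x)) :=
      hcY.tendsto.mono_left nhdsWithin_le_nhds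
    have t2 : Filter.Tendsto profY (nhdsWithin x C) (nhds (profY' x)) := by
      refine (hcY'.tendsto.mono_left nhdsWithin_le_nhds).congr' ?_
      filter_upwards [self_mem_nhdsWithin] with q hq
      exact (hCE q hq).symm
    exact tendsto_nhds_unique t1 t2
  obtain ⟨hYne, hYcl, hYcv, hYfd, -⟩ := hY
  obtain ⟨hY'ne, hY'cl, hY'cv, hY'fd, -⟩ := hY'
  apply Set.Subset.antisymm
  · exact subset_of_prof_eq Y Y' hY'ne hY'cl hY'cv hY'fd profY profY' hprofY hprofY' hpe
  · exact subset_of_prof_eq Y' Y hYne hYcl hYcv hYfd profY' profY hprofY' hprofY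
      fun p hp => (hpe p hp).symm
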